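/- For every natural number n, the centered period-5 alternating window sum of row n of the 3-Pascal triangle with offset 2 equals the Fibonacci number of index n+1: Σ_{j∈ℤ} [ T(n, 5j) − T(n, 5j + 2) ] = Fib(n+1). -/

import Mathlib

open Polynomial in
/-- Trinomial coefficient `T(n, k)`: the coefficient of `x^(n+k)` in `(1 + x + x²)^n`
over `ℤ` (the entries of the 3-Pascal triangle), with `T(n, k) = 0` for `|k| > n`. -/
noncomputable def trinom (n : ℕ) (k : ℤ) : ℤ :=
  if 0 ≤ (n : ℤ) + k then ((1 + X + X ^ 2 : Polynomial ℤ) ^ n).coeff ((n : ℤ) + k).toNat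
  else 0

open Polynomial

/-- Extended coefficient function. -/
noncomputable def tcoe (n : ℕ) (k : ℤ) : ℤ :=
  if 0 ≤ k then ((1 + X + X ^ 2 : Polynomial ℤ) ^ n).coeff k.toNat else 0

lemma trinom_eq_tcoe (n : ℕ) (k : ℤ) : trinom n k = tcoe n (n + k) := rfl

lemma tcoe_rec (n : ℕ) (k : ℤ) :
    tcoe (n + 1) k = tcoe n k + tcoe n (k - 1) + tcoe n (k - 2) := by
  rcases lt_or_ge k 0 with hk | hk
  · unfold tcoe
    rw [if_neg (by omega), if_neg (by omega), if_neg (by omega), if_neg (by omega)]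
    ring
  · obtain ⟨m, rfl⟩ := Int.eq_ofNat_of_zero_le hk
    set p : Polynomial ℤ := (1 + X + X ^ 2) ^ n with hp
    have e0 : tcoe n (m : ℤ) = p.coeff m := by
      unfold tcoe; rw [if_pos (by omega), Int.toNat_natCast]
    have e1 : tcoe n ((m : ℤ) - 1) = (p * X).coeff m := by
      rw [← pow_one (X : Polynomial ℤ), coeff_mul_X_pow']
      unfold tcoe
      rcases Nat.lt_or_ge m 1 with h | h
      · rw [if_neg (by omega), if_neg (by omega)]
      · rw [if_pos (by omega), if_pos (by omega)]
        congr 1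
        omega
    have e2 : tcoe n ((m : ℤ) - 2) = (p * X ^ 2).coeff m := by
      rw [coeff_mul_X_pow']
      unfold tcoe
      rcases Nat.lt_or_ge m 2 with h | h
      · rw [if_neg (by omega), if_neg (by omega)]
      · rw [if_pos (by omega), if_pos (by omega)]
        congr 1
        omega
    have main : tcoe (n + 1) (m : ℤ)
        = p.coeff m + (p * X).coeff m + (p * X ^ 2).coeff m := by
      unfold tcoe
      rw [if_pos (by omega), Int.toNat_natCast]
      have : (1 + X + X ^ 2 : Polynomial ℤ) ^ (n + 1) = p + p * X + p * X ^ 2 := by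
        rw [hp]; ring
      rw [this, coeff_add, coeff_add]
    rw [main, e0, e1, e2]

lemma trinom_rec (n : ℕ) (k : ℤ) :
    trinom (n + 1) k = trinom n (k + 1) + trinom n k + trinom n (k - 1) := by
  rw [trinom_eq_tcoe, trinom_eq_tcoe, trinom_eq_tcoe, trinom_eq_tcoe, tcoe_rec]
  push_cast
  congr 2 <;> ring_nf

lemma trinom_zero (k : ℤ) : trinom 0 k = if k = 0 then 1 else 0 := by
  unfold trinom
  rcases eq_or_ne k 0 with rfl | hk
  · simp
  · rcases lt_or_ge k 0 with h | h
    · rw [if_neg (by omega), if_neg hk]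
    · rw [if_pos (by omega), if_neg hk, pow_zero, coeff_one]
      rw [if_neg (by omega)]

lemma trinom_symm (n : ℕ) (k : ℤ) : trinom n (-k) = trinom n k := by
  induction n generalizing k with
  | zero => rw [trinom_zero, trinom_zero]; simp [neg_eq_zero]
  | succ n ih =>
    rw [trinom_rec, trinom_rec]
    have h1 : -k + 1 = -(k - 1) := by ring
    have h2 : -k - 1 = -(k + 1) := by ring
    rw [h1, h2, ih, ih, ih]
    ring

lemma natDegree_tri (n : ℕ) : ((1 + X + X ^ 2 : Polynomial ℤ) ^ n).natDegree ≤ 2 * n := by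
  refine le_trans (natDegree_pow_le) ?_
  have : (1 + X + X ^ 2 : Polynomial ℤ).natDegree ≤ 2 := by
    refine le_trans (natDegree_add_le _ _) ?_
    simp [natDegree_add_le_iff_left]
  calc n * (1 + X + X ^ 2 : Polynomial ℤ).natDegree ≤ n * 2 := Nat.mul_le_mul_left n this
    _ = 2 * n := by ring

lemma trinom_eq_zero (n : ℕ) {k : ℤ} (h : (n : ℤ) < |k|) : trinom n k = 0 := by
  have h' := lt_abs.mp h
  unfold trinom
  rcases lt_or_ge ((n : ℤ) + k) 0 with hc | hc
  · rw [if_neg (by omega)]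
  · rw [if_pos hc]
    apply coeff_eq_zero_of_natDegree_lt
    have := natDegree_tri n
    omega

lemma support_finite (n : ℕ) (r : ℤ) :
    (Function.support fun j : ℤ => trinom n (5 * j + r)).Finite := by
  apply Set.Finite.subset (Set.finite_Icc (-(n : ℤ) - |r|) ((n : ℤ) + |r|))
  intro j hj
  simp only [Function.mem_support] at hj
  simp only [Set.mem_Icc]
  by_contra hc
  apply hj
  apply trinom_eq_zero
  rw [lt_abs]
  have h1 := le_abs_self r
  have h2 := neg_abs_le r
  omega

/-- residue-class sum -/
noncomputable def A (n : ℕ) (r : ℤ) : ℤ := ∑ᶠ j : ℤ, trinom n (5 * j + r)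

lemma A_rec (n : ℕ) (r : ℤ) : A (n + 1) r = A n (r + 1) + A n r + A n (r - 1) := by
  unfold A
  have h1 := support_finite n (r + 1)
  have h2 := support_finite n r
  have h3 := support_finite n (r - 1)
  calc (∑ᶠ j : ℤ, trinom (n + 1) (5 * j + r))
      = ∑ᶠ j : ℤ, ((trinom n (5 * j + (r + 1)) + trinom n (5 * j + r))
          + trinom n (5 * j + (r - 1))) := by
        apply finsum_congr; intro j
        rw [trinom_rec]
        congr 2 <;> ring_nf
    _ = _ := by
        rw [finsum_add_distrib _ h3, finsum_add_distrib h1 h2]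
        apply Set.Finite.subset (h1.union h2)
        intro j hj
        simp only [Function.mem_support] at hj
        by_contra hc
        simp only [Set.mem_union, Function.mem_support, not_or, not_not] at hc
        apply hj; rw [hc.1, hc.2]; ring

lemma A_shift (n : ℕ) (r : ℤ) : A n (r + 5) = A n r := by
  unfold A
  have := finsum_comp_equiv (Equiv.addRight (1 : ℤ))
    (f := fun j : ℤ => trinom n (5 * j + r))
  rw [← this]
  apply finsum_congr; intro j
  simp only [Equiv.coe_addRight]
  congr 1; ring

lemma A_neg (n : ℕ) (r : ℤ) : A n (-r) = A n r := by
  unfold A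
  have := finsum_comp_equiv (Equiv.neg ℤ) (f := fun j : ℤ => trinom n (5 * j + -r))
  rw [← this]
  apply finsum_congr; intro j
  simp only [Equiv.neg_apply]
  rw [← trinom_symm]
  congr 1; ring

lemma A_zero_zero : A 0 0 = 1 := by
  unfold A
  rw [finsum_eq_single _ 0]
  · rw [trinom_zero]; norm_num
  · intro j hj
    rw [trinom_zero, if_neg (by omega)]

lemma A_zero_one : A 0 1 = 0 := by
  unfold A
  apply finsum_eq_zero_of_forall_eq_zero
  intro j
  rw [trinom_zero, if_neg (by omega)]

lemma A_zero_two : A 0 2 = 0 := by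
  unfold A
  apply finsum_eq_zero_of_forall_eq_zero
  intro j
  rw [trinom_zero, if_neg (by omega)]

lemma UV (n : ℕ) : A n 0 - A n 2 = (Nat.fib (n + 1) : ℤ) ∧
    A n 1 - A n 2 = (Nat.fib n : ℤ) := by
  induction n with
  | zero =>
    rw [A_zero_zero, A_zero_one, A_zero_two]
    simp
  | succ n ih =>
    obtain ⟨hU, hV⟩ := ih
    have h3 : A n 3 = A n 2 := by
      have := A_shift n (-2)
      rw [A_neg] at this
      rw [← this]; norm_num
    have hm1 : A n (-1) = A n 1 := A_neg n 1
    have hfib : (Nat.fib (n + 2) : ℤ) = (Nat.fib (n + 1) : ℤ) + (Nat.fib n : ℤ) := by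
      rw [Nat.fib_add_two]; push_cast; ring
    constructor
    · rw [A_rec, A_rec]
      norm_num
      rw [h3, hm1]
      linarith
    · rw [A_rec, A_rec]
      norm_num
      rw [h3]
      linarith

/-- The centered period-5 alternating window sum of row n of the 3-Pascal triangle
with offset 2 equals the Fibonacci number Fib(n+1). -/
theorem trinomial_period_five_window_sum_offset_two (n : ℕ) :
    ∑ᶠ j : ℤ, (trinom n (5 * j) - trinom n (5 * j + 2)) = (Nat.fib (n + 1) : ℤ) := by
  have h0 := support_finite n 0
  have h2 := support_finite n 2
  have key : (∑ᶠ j : ℤ, (trinom n (5 * j) - trinom n (5 * j + 2)))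
      = (∑ᶠ j : ℤ, trinom n (5 * j + 0)) - ∑ᶠ j : ℤ, trinom n (5 * j + 2) := by
    rw [← finsum_sub_distrib h0 h2]
    apply finsum_congr; intro j
    norm_num
  rw [key]
  exact (UV n).1
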